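/- Let 0 < d < 2 and t₀ ∈ (0,1), and let ε : (0, t₀) → (0, ∞) be a continuous strictly increasing function such that ε(t) → 0 as t → 0⁺, for every α > 0 one has t^α/ε(t) → 0 as t → 0⁺, and the function t ↦ ε(t)^{1/(2−d)}/t is nonincreasing on (0, t₀). Let h : [0, ∞) → [0, ∞) be any gauge function (continuous, nondecreasing, h(0) = 0, h(t) > 0 for t > 0) satisfying h(t) = t^d·ε(t) for all t ∈ (0, t₀). Then there exists a compact set E ⊆ ℂ such that the generalized Hausdorff measure of E with gauge h is strictly positive and finite: 0 < H^h(E) < ∞. -/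

import Mathlib

open Set Filter Topology MeasureTheory
open scoped ENNReal

namespace Stmt16Aux


/-- base-4 digits of a real number -/
noncomputable def dig4 (x : ℝ) (n : ℕ) : Fin 4 :=
  ⟨(⌊x * 4 ^ (n + 1)⌋ % 4).toNat, by
    have h4 : (0:ℤ) < 4 := by norm_num
    have := Int.emod_lt_of_pos (⌊x * 4 ^ (n + 1)⌋) h4
    have := Int.emod_nonneg (⌊x * 4 ^ (n + 1)⌋) (by norm_num : (4:ℤ) ≠ 0)
    omega⟩

lemma dig4_floor (x : ℝ) (n : ℕ) :
    ⌊x * 4 ^ (n + 1)⌋ = 4 * ⌊x * 4 ^ n⌋ + ((dig4 x n : ℕ) : ℤ) := by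
  have h1 : (4:ℝ) * (x * 4 ^ n) = x * 4 ^ (n+1) := by ring
  have hk : (4:ℤ) * ⌊x * 4 ^ n⌋ ≤ ⌊x * 4 ^ (n+1)⌋ := by
    rw [← h1]
    have : ((4 * ⌊x * 4 ^ n⌋ : ℤ) : ℝ) ≤ 4 * (x * 4 ^ n) := by
      push_cast
      have := Int.floor_le (x * 4 ^ n)
      linarith
    exact Int.le_floor.2 this
  have hk2 : ⌊x * 4 ^ (n+1)⌋ < 4 * ⌊x * 4 ^ n⌋ + 4 := by
    rw [← h1]
    have : (4:ℝ) * (x * 4 ^ n) < ((4 * ⌊x * 4 ^ n⌋ + 4 : ℤ) : ℝ) := by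
      push_cast
      have := Int.lt_floor_add_one (x * 4 ^ n)
      linarith
    exact Int.floor_lt.2 this
  have hd : ((dig4 x n : ℕ) : ℤ) = ⌊x * 4 ^ (n+1)⌋ % 4 := by
    simp only [dig4]
    have := Int.emod_nonneg (⌊x * 4 ^ (n + 1)⌋) (by norm_num : (4:ℤ) ≠ 0)
    simp [Int.toNat_of_nonneg this]
  omega

lemma floor_eq_of_digits {x y : ℝ} (hx : x ∈ Ico (0:ℝ) 1) (hy : y ∈ Ico (0:ℝ) 1)
    (n : ℕ) (hdig : ∀ m < n, dig4 x m = dig4 y m) :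
    ⌊x * 4 ^ n⌋ = ⌊y * 4 ^ n⌋ := by
  induction n with
  | zero =>
    simp only [pow_zero, mul_one]
    rw [Int.floor_eq_zero_iff.2 (by simpa using hx), Int.floor_eq_zero_iff.2 (by simpa using hy)]
  | succ n ih =>
    rw [dig4_floor x n, dig4_floor y n, ih (fun m hm => hdig m (by omega)),
      hdig n (by omega)]

/-- the cylinder of a base-4 prefix -/
def cyl (n : ℕ) (w : Fin n → Fin 4) : Set ℝ :=
  {x ∈ Ico (0:ℝ) 1 | ∀ m : Fin n, dig4 x (m : ℕ) = w m}

lemma volume_cyl (n : ℕ) (w : Fin n → Fin 4) :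
    volume (cyl n w) ≤ ENNReal.ofReal (((4:ℝ) ^ n)⁻¹) := by
  rcases (cyl n w).eq_empty_or_nonempty with hE | ⟨y, hy⟩
  · simp [hE]
  · obtain ⟨hy01, hyd⟩ := hy
    set k : ℤ := ⌊y * 4 ^ n⌋ with hk
    have hsub : cyl n w ⊆ Ico ((k : ℝ) / 4 ^ n) ((k + 1 : ℝ) / 4 ^ n) := by
      rintro x ⟨hx01, hxd⟩
      have hfl : ⌊x * 4 ^ n⌋ = k := by
        refine floor_eq_of_digits hx01 hy01 n fun m hm => ?_
        rw [hxd ⟨m, hm⟩, hyd ⟨m, hm⟩]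
      have h1 : (k : ℝ) ≤ x * 4 ^ n := by rw [← hfl]; exact Int.floor_le _
      have h2 : x * 4 ^ n < (k : ℝ) + 1 := by rw [← hfl]; exact Int.lt_floor_add_one _
      have h4 : (0:ℝ) < 4 ^ n := by positivity
      constructor
      · rw [div_le_iff₀ h4]; linarith
      · rw [lt_div_iff₀ h4]; push_cast; linarith
    calc volume (cyl n w) ≤ volume (Ico ((k : ℝ) / 4 ^ n) ((k + 1 : ℝ) / 4 ^ n)) :=
          measure_mono hsub
      _ = ENNReal.ofReal (((4:ℝ) ^ n)⁻¹) := by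
          rw [Real.volume_Ico]
          congr 1
          field_simp
          ring



/-- real parts of the four corner directions -/
def cRe : Fin 4 → ℝ := ![0, 1, 0, 1]
/-- imaginary parts of the four corner directions -/
def cIm : Fin 4 → ℝ := ![0, 0, 1, 1]
/-- the four corner directions -/
noncomputable def cc (k : Fin 4) : ℂ := ⟨cRe k, cIm k⟩

lemma cRe_mem (k : Fin 4) : cRe k ∈ Icc (0:ℝ) 1 := by
  fin_cases k <;> simp [cRe] <;> norm_num
lemma cIm_mem (k : Fin 4) : cIm k ∈ Icc (0:ℝ) 1 := by
  fin_cases k <;> simp [cIm] <;> norm_num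

lemma cc_norm (k : Fin 4) : ‖cc k‖ ≤ 2 := by
  have h := Complex.norm_le_abs_re_add_abs_im (cc k)
  have h1 := cRe_mem k; have h2 := cIm_mem k
  simp only [cc] at h
  have : |cRe k| + |cIm k| ≤ 2 := by
    rw [abs_of_nonneg h1.1, abs_of_nonneg h2.1]; linarith [h1.2, h2.2]
  calc ‖cc k‖ = ‖cc k‖ := rfl
    _ ≤ |(cc k).re| + |(cc k).im| := Complex.norm_le_abs_re_add_abs_im _
    _ ≤ 2 := by simpa [cc] using this

lemma cc_cases {k k' : Fin 4} (h : k ≠ k') :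
    (cRe k = 0 ∧ cRe k' = 1) ∨ (cRe k = 1 ∧ cRe k' = 0) ∨
    (cIm k = 0 ∧ cIm k' = 1) ∨ (cIm k = 1 ∧ cIm k' = 0) := by
  fin_cases k <;> fin_cases k' <;> simp_all [cRe, cIm]

/-- closed axis-parallel square with lower-left corner `p` and side `s` -/
def Sq (p : ℂ) (s : ℝ) : Set ℂ :=
  {z | z.re ∈ Icc p.re (p.re + s) ∧ z.im ∈ Icc p.im (p.im + s)}

/-- open square -/
def oSq (p : ℂ) (s : ℝ) : Set ℂ :=
  {z | z.re ∈ Ioo p.re (p.re + s) ∧ z.im ∈ Ioo p.im (p.im + s)}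

lemma oSq_subset_Sq (p : ℂ) (s : ℝ) : oSq p s ⊆ Sq p s := by
  rintro z ⟨⟨h1, h2⟩, h3, h4⟩; exact ⟨⟨h1.le, h2.le⟩, h3.le, h4.le⟩

lemma measurableSet_oSq (p : ℂ) (s : ℝ) : MeasurableSet (oSq p s) := by
  have : oSq p s = Complex.measurableEquivRealProd ⁻¹'
      (Ioo p.re (p.re + s) ×ˢ Ioo p.im (p.im + s)) := by
    ext z
    simp [oSq, Set.mem_prod, Complex.measurableEquivRealProd_apply]
  rw [this]
  exact (measurableSet_Ioo.prod measurableSet_Ioo).preimage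
    Complex.measurableEquivRealProd.measurable

lemma volume_square_aux (S : Set ℝ) (T : Set ℝ) (hS : MeasurableSet S) (hT : MeasurableSet T) :
    volume {z : ℂ | z.re ∈ S ∧ z.im ∈ T} = volume S * volume T := by
  have : {z : ℂ | z.re ∈ S ∧ z.im ∈ T} = Complex.measurableEquivRealProd ⁻¹' (S ×ˢ T) := by
    ext z
    simp [Set.mem_prod, Complex.measurableEquivRealProd_apply]
  rw [this, Complex.volume_preserving_equiv_real_prod.measure_preimage
    ((hS.prod hT).nullMeasurableSet)]
  rw [MeasureTheory.Measure.volume_eq_prod, MeasureTheory.Measure.prod_prod]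

lemma volume_oSq (p : ℂ) (s : ℝ) :
    volume (oSq p s) = ENNReal.ofReal s * ENNReal.ofReal s := by
  have := volume_square_aux (Ioo p.re (p.re + s)) (Ioo p.im (p.im + s))
    measurableSet_Ioo measurableSet_Ioo
  rw [oSq]; rw [show {z : ℂ | z.re ∈ Ioo p.re (p.re + s) ∧ z.im ∈ Ioo p.im (p.im + s)} =
    {z : ℂ | z.re ∈ Ioo p.re (p.re + s) ∧ z.im ∈ Ioo p.im (p.im + s)} from rfl, this]
  simp [Real.volume_Ioo]

lemma volume_Sq (p : ℂ) (s : ℝ) :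
    volume (Sq p s) = ENNReal.ofReal s * ENNReal.ofReal s := by
  have := volume_square_aux (Icc p.re (p.re + s)) (Icc p.im (p.im + s))
    measurableSet_Icc measurableSet_Icc
  rw [Sq, this]
  simp [Real.volume_Icc]

lemma diam_Sq (p : ℂ) (s : ℝ) (hs : 0 ≤ s) :
    EMetric.diam (Sq p s) ≤ ENNReal.ofReal (2 * s) := by
  refine EMetric.diam_le fun z hz z' hz' => ?_
  rw [edist_dist]
  refine ENNReal.ofReal_le_ofReal ?_
  have h1 : |z.re - z'.re| ≤ s := by
    rw [abs_sub_le_iff]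
    obtain ⟨⟨a1, a2⟩, _⟩ := hz; obtain ⟨⟨b1, b2⟩, _⟩ := hz'
    constructor <;> linarith
  have h2 : |z.im - z'.im| ≤ s := by
    rw [abs_sub_le_iff]
    obtain ⟨_, ⟨a1, a2⟩⟩ := hz; obtain ⟨_, ⟨b1, b2⟩⟩ := hz'
    constructor <;> linarith
  calc dist z z' = ‖z - z'‖ := dist_eq_norm _ _
    _ ≤ |(z - z').re| + |(z - z').im| := Complex.norm_le_abs_re_add_abs_im _
    _ ≤ 2 * s := by simp only [Complex.sub_re, Complex.sub_im]; linarith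





section Seq

variable (L : ℕ → ℝ)

/-- partial corner sums -/
noncomputable def P (n : ℕ) (ω : ℕ → Fin 4) : ℂ :=
  ∑ j ∈ Finset.range n, ((L j - L (j + 1) : ℝ) : ℂ) * cc (ω j)

/-- the limit point of an address -/
noncomputable def ff (ω : ℕ → Fin 4) : ℂ :=
  ∑' j, ((L j - L (j + 1) : ℝ) : ℂ) * cc (ω j)

variable (hLpos : ∀ n, 0 < L n) (hLhalf : ∀ n, L (n + 1) ≤ L n / 2)
include hLpos hLhalf

lemma L_antitone : ∀ n, L (n + 1) ≤ L n := fun n =>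
  (hLhalf n).trans (by linarith [hLpos n])

lemma L_tendsto : Tendsto L atTop (𝓝 0) := by
  have hgeo : ∀ n, L n ≤ L 0 * (1 / 2) ^ n := by
    intro n; induction n with
    | zero => simp
    | succ n ih =>
      calc L (n + 1) ≤ L n / 2 := hLhalf n
        _ ≤ L 0 * (1 / 2) ^ n / 2 := by linarith
        _ = L 0 * (1 / 2) ^ (n + 1) := by ring
  have h2 : Tendsto (fun n => L 0 * (1 / 2 : ℝ) ^ n) atTop (𝓝 0) := by
    have := tendsto_pow_atTop_nhds_zero_of_lt_one (by norm_num : (0:ℝ) ≤ 1/2)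
      (by norm_num : (1/2:ℝ) < 1)
    simpa using this.const_mul (L 0)
  exact tendsto_of_tendsto_of_tendsto_of_le_of_le tendsto_const_nhds h2
    (fun n => (hLpos n).le) hgeo

lemma hasSum_tel (n : ℕ) : HasSum (fun m => L (n + m) - L (n + m + 1)) (L n) := by
  rw [hasSum_iff_tendsto_nat_of_nonneg (fun i => by
    have := L_antitone L hLpos hLhalf (n + i); linarith)]
  have hps : ∀ M, ∑ i ∈ Finset.range M, (L (n + i) - L (n + i + 1)) = L n - L (n + M) := by
    intro M
    have := Finset.sum_range_sub' (fun i => L (n + i)) M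
    simpa [add_assoc] using this
  simp only [hps]
  have h' : Tendsto (fun M => L (M + n)) atTop (𝓝 0) :=
    (L_tendsto L hLpos hLhalf).comp (tendsto_add_atTop_nat n)
  have : Tendsto (fun M => L (n + M)) atTop (𝓝 0) := by
    simpa [add_comm] using h'
  simpa using tendsto_const_nhds.sub this

lemma summable_tel : Summable (fun m => L m - L (m + 1)) := by
  have := (hasSum_tel L hLpos hLhalf 0).summable
  simpa using this

lemma weighted_tsum_mem (n : ℕ) (b : ℕ → ℝ) (hb : ∀ j, b j ∈ Icc (0:ℝ) 1) :
    (∑' m, (L (n + m) - L (n + m + 1)) * b (n + m)) ∈ Icc (0:ℝ) (L n) := by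
  have hnn : ∀ m, 0 ≤ (L (n + m) - L (n + m + 1)) * b (n + m) := fun m =>
    mul_nonneg (by have := L_antitone L hLpos hLhalf (n + m); linarith) (hb _).1
  have hle : ∀ m, (L (n + m) - L (n + m + 1)) * b (n + m) ≤ L (n + m) - L (n + m + 1) := by
    intro m
    have h1 : 0 ≤ L (n + m) - L (n + m + 1) := by
      have := L_antitone L hLpos hLhalf (n + m); linarith
    nlinarith [(hb (n + m)).2]
  have hsum : Summable (fun m => (L (n + m) - L (n + m + 1)) * b (n + m)) :=
    Summable.of_nonneg_of_le hnn hle (hasSum_tel L hLpos hLhalf n).summable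
  constructor
  · exact tsum_nonneg hnn
  · calc (∑' m, (L (n + m) - L (n + m + 1)) * b (n + m))
        ≤ ∑' m, (L (n + m) - L (n + m + 1)) :=
          hsum.tsum_le_tsum hle (hasSum_tel L hLpos hLhalf n).summable
      _ = L n := (hasSum_tel L hLpos hLhalf n).tsum_eq

lemma summable_term (ω : ℕ → Fin 4) :
    Summable (fun j => ((L j - L (j + 1) : ℝ) : ℂ) * cc (ω j)) := by
  refine Summable.of_norm_bounded
    ((summable_tel L hLpos hLhalf).mul_left 2) fun j => ?_
  rw [norm_mul, Complex.norm_real, Real.norm_eq_abs]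
  have h1 : 0 ≤ L j - L (j + 1) := by
    have := L_antitone L hLpos hLhalf j; linarith
  rw [abs_of_nonneg h1]
  calc (L j - L (j+1)) * ‖cc (ω j)‖ ≤ (L j - L (j+1)) * 2 :=
        mul_le_mul_of_nonneg_left (cc_norm _) h1
    _ = 2 * (L j - L (j+1)) := by ring

lemma tail_re_im (ω : ℕ → Fin 4) (n : ℕ) :
    (ff L ω - P L n ω).re ∈ Icc (0:ℝ) (L n) ∧
    (ff L ω - P L n ω).im ∈ Icc (0:ℝ) (L n) := by
  have hsum := summable_term L hLpos hLhalf ω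
  have hsplit := hsum.sum_add_tsum_nat_add (f := fun j => ((L j - L (j + 1) : ℝ) : ℂ) * cc (ω j))
    n
  have htail : ff L ω - P L n ω = ∑' i, ((L (i + n) - L (i + n + 1) : ℝ) : ℂ) * cc (ω (i + n)) := by
    rw [ff, P, ← hsplit]; ring
  have hre : (fun i => (((L (i + n) - L (i + n + 1) : ℝ) : ℂ) * cc (ω (i + n))).re)
      = fun i => (L (n + i) - L (n + i + 1)) * cRe (ω (n + i)) := by
    funext i
    simp [cc, Complex.mul_re, add_comm i n]
  have him : (fun i => (((L (i + n) - L (i + n + 1) : ℝ) : ℂ) * cc (ω (i + n))).im)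
      = fun i => (L (n + i) - L (n + i + 1)) * cIm (ω (n + i)) := by
    funext i
    simp [cc, Complex.mul_im, add_comm i n]
  have hsum' : Summable (fun i => ((L (i + n) - L (i + n + 1) : ℝ) : ℂ) * cc (ω (i + n))) :=
    hsum.comp_injective (add_left_injective n)
  constructor
  · rw [htail, Complex.re_tsum hsum', hre]
    exact weighted_tsum_mem L hLpos hLhalf n (fun j => cRe (ω j)) (fun j => cRe_mem _)
  · rw [htail, Complex.im_tsum hsum', him]
    exact weighted_tsum_mem L hLpos hLhalf n (fun j => cIm (ω j)) (fun j => cIm_mem _)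

lemma ff_mem_Sq (ω : ℕ → Fin 4) (n : ℕ) : ff L ω ∈ Sq (P L n ω) (L n) := by
  obtain ⟨⟨h1, h2⟩, h3, h4⟩ := tail_re_im L hLpos hLhalf ω n
  simp only [Complex.sub_re, Complex.sub_im] at h1 h2 h3 h4
  exact ⟨⟨by linarith, by linarith⟩, by linarith, by linarith⟩

lemma ff_continuous : Continuous (ff L) := by
  refine continuous_tsum (f := fun j (ω : ℕ → Fin 4) => ((L j - L (j + 1) : ℝ) : ℂ) * cc (ω j))
    (fun j => ?_) ((summable_tel L hLpos hLhalf).mul_left 2) (fun j ω => ?_)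
  · exact continuous_const.mul (Continuous.comp' continuous_of_discreteTopology (continuous_apply j))
  · rw [norm_mul, Complex.norm_real, Real.norm_eq_abs]
    have h1 : 0 ≤ L j - L (j + 1) := by
      have := L_antitone L hLpos hLhalf j; linarith
    rw [abs_of_nonneg h1]
    calc (L j - L (j+1)) * ‖cc (ω j)‖ ≤ (L j - L (j+1)) * 2 :=
          mul_le_mul_of_nonneg_left (cc_norm _) h1
      _ = 2 * (L j - L (j+1)) := by ring

lemma sep {n m : ℕ} (hmn : m < n) (b b' : ℕ → ℝ)
    (hb : ∀ j, b j ∈ Icc (0:ℝ) 1) (hb' : ∀ j, b' j ∈ Icc (0:ℝ) 1)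
    (hag : ∀ j < m, b j = b' j) (h0 : b m = 0) (h1 : b' m = 1) :
    ∑ j ∈ Finset.range n, (L j - L (j + 1)) * b j + L n
      ≤ ∑ j ∈ Finset.range n, (L j - L (j + 1)) * b' j := by
  have hsplit : ∀ c : ℕ → ℝ, ∑ j ∈ Finset.range n, c j
      = ∑ j ∈ Finset.range m, c j + c m + ∑ j ∈ Finset.Ico (m + 1) n, c j := by
    intro c
    rw [Finset.range_eq_Ico, ← Finset.sum_Ico_consecutive c (Nat.zero_le m) hmn.le,
      ← Finset.sum_Ico_consecutive c (Nat.le_succ m) (Nat.succ_le_of_lt hmn),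
      Nat.Ico_succ_singleton, Finset.sum_singleton, ← Finset.range_eq_Ico, add_assoc,
      ← add_assoc]
  have htel : ∑ j ∈ Finset.Ico (m + 1) n, (L j - L (j + 1)) = L (m + 1) - L n := by
    rw [Finset.sum_Ico_eq_sub _ (Nat.succ_le_of_lt hmn), Finset.sum_range_sub' L,
      Finset.sum_range_sub' L]
    ring
  have hbd : ∀ (c : ℕ → ℝ), (∀ j, c j ∈ Icc (0:ℝ) 1) →
      ∑ j ∈ Finset.Ico (m + 1) n, (L j - L (j + 1)) * c j ∈ Icc (0:ℝ) (L (m + 1) - L n) := by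
    intro c hc
    constructor
    · exact Finset.sum_nonneg fun j _ => mul_nonneg
        (by have := L_antitone L hLpos hLhalf j; linarith) (hc j).1
    · rw [← htel]
      refine Finset.sum_le_sum fun j _ => ?_
      have h1 : 0 ≤ L j - L (j + 1) := by have := L_antitone L hLpos hLhalf j; linarith
      nlinarith [(hc j).2]
  have hA : ∑ j ∈ Finset.range m, (L j - L (j + 1)) * b j
      = ∑ j ∈ Finset.range m, (L j - L (j + 1)) * b' j :=
    Finset.sum_congr rfl fun j hj => by rw [hag j (Finset.mem_range.1 hj)]
  have hb2 := hbd b hb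
  have hb'2 := hbd b' hb'
  have hL2 : 2 * L (m + 1) ≤ L m := by have := hLhalf m; linarith
  rw [hsplit (fun j => (L j - L (j + 1)) * b j), hsplit (fun j => (L j - L (j + 1)) * b' j)]
  simp only [h0, h1, mul_zero, mul_one] at *
  obtain ⟨c1, c2⟩ := hb2; obtain ⟨c3, c4⟩ := hb'2
  linarith

lemma oSq_disjoint {n m : ℕ} (hmn : m < n) (ω ω' : ℕ → Fin 4)
    (hne : ω m ≠ ω' m) (hag : ∀ j < m, ω j = ω' j) :
    oSq (P L n ω) (L n) ∩ oSq (P L n ω') (L n) = ∅ := by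
  have hPre : ∀ ω₀ : ℕ → Fin 4, (P L n ω₀).re
      = ∑ j ∈ Finset.range n, (L j - L (j + 1)) * cRe (ω₀ j) := by
    intro ω₀
    rw [P, Complex.re_sum]
    exact Finset.sum_congr rfl fun j _ => by simp [cc, Complex.mul_re]
  have hPim : ∀ ω₀ : ℕ → Fin 4, (P L n ω₀).im
      = ∑ j ∈ Finset.range n, (L j - L (j + 1)) * cIm (ω₀ j) := by
    intro ω₀
    rw [P, Complex.im_sum]
    exact Finset.sum_congr rfl fun j _ => by simp [cc, Complex.mul_im]
  have key : (P L n ω).re + L n ≤ (P L n ω').re ∨ (P L n ω').re + L n ≤ (P L n ω).re ∨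
      (P L n ω).im + L n ≤ (P L n ω').im ∨ (P L n ω').im + L n ≤ (P L n ω).im := by
    rcases cc_cases hne with ⟨h0, h1⟩ | ⟨h0, h1⟩ | ⟨h0, h1⟩ | ⟨h0, h1⟩
    · left
      rw [hPre, hPre]
      exact sep L hLpos hLhalf hmn _ _ (fun j => cRe_mem _) (fun j => cRe_mem _)
        (fun j hj => by rw [hag j hj]) h0 h1
    · right; left
      rw [hPre, hPre]
      exact sep L hLpos hLhalf hmn _ _ (fun j => cRe_mem _) (fun j => cRe_mem _)
        (fun j hj => by rw [hag j hj]) h1 h0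
    · right; right; left
      rw [hPim, hPim]
      exact sep L hLpos hLhalf hmn _ _ (fun j => cIm_mem _) (fun j => cIm_mem _)
        (fun j hj => by rw [hag j hj]) h0 h1
    · right; right; right
      rw [hPim, hPim]
      exact sep L hLpos hLhalf hmn _ _ (fun j => cIm_mem _) (fun j => cIm_mem _)
        (fun j hj => by rw [hag j hj]) h1 h0
  ext z
  simp only [mem_inter_iff, mem_empty_iff_false, iff_false, not_and]
  rintro ⟨⟨a1, a2⟩, a3, a4⟩ ⟨⟨b1, b2⟩, b3, b4⟩
  rcases key with hk | hk | hk | hk <;> linarith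

end Seq

section Count

variable (L : ℕ → ℝ) (hLpos : ∀ n, 0 < L n) (hLhalf : ∀ n, L (n + 1) ≤ L n / 2)

/-- the Cantor-type map on `[0,1)` -/
noncomputable def gg (x : ℝ) : ℂ := ff L (dig4 x)

/-- extend a finite prefix by `0` -/
def ext (n : ℕ) (w : Fin n → Fin 4) : ℕ → Fin 4 := fun j => if h : j < n then w ⟨j, h⟩ else 0

lemma P_ext (n : ℕ) (ω : ℕ → Fin 4) : P L n (ext n (fun m : Fin n => ω m)) = P L n ω := by
  refine Finset.sum_congr rfl fun j hj => ?_
  rw [ext]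
  simp [Finset.mem_range.1 hj]

include hLpos hLhalf in
lemma mass_bound (n : ℕ) (U : Set ℂ) (hU : EMetric.diam U ≤ ENNReal.ofReal (L n)) :
    volume (gg L ⁻¹' U ∩ Ico (0:ℝ) 1) ≤ 16 * ENNReal.ofReal (((4:ℝ) ^ n)⁻¹) := by
  classical
  rcases U.eq_empty_or_nonempty with rfl | ⟨u, hu⟩
  · simp
  set S : Finset (Fin n → Fin 4) :=
    Finset.univ.filter (fun w => (Sq (P L n (ext n w)) (L n) ∩ U).Nonempty) with hS
  have hincl : gg L ⁻¹' U ∩ Ico (0:ℝ) 1 ⊆ ⋃ w ∈ S, cyl n w := by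
    rintro x ⟨hxU, hx01⟩
    have hw : (fun m : Fin n => dig4 x m) ∈ S := by
      rw [hS, Finset.mem_filter]
      refine ⟨Finset.mem_univ _, ⟨gg L x, ?_, hxU⟩⟩
      rw [P_ext]
      exact ff_mem_Sq L hLpos hLhalf (dig4 x) n
    exact mem_biUnion hw ⟨hx01, fun m => rfl⟩
  -- pairwise disjointness of the open squares
  have hdisj : (S : Set (Fin n → Fin 4)).PairwiseDisjoint
      (fun w => oSq (P L n (ext n w)) (L n)) := by
    intro w _ w' _ hne
    obtain ⟨m0, hm0⟩ := Function.ne_iff.1 hne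
    have hex : ∃ j, ext n w j ≠ ext n w' j := by
      refine ⟨m0, ?_⟩
      rw [ext, ext]
      simpa [m0.2] using hm0
    set m := Nat.find hex with hm
    have hspec : ext n w m ≠ ext n w' m := Nat.find_spec hex
    have hmn : m < n := by
      by_contra hge
      apply hspec
      rw [ext, ext]
      simp [hge]
    have hag : ∀ j < m, ext n w j = ext n w' j := fun j hj =>
      not_not.1 (Nat.find_min hex hj)
    exact Set.disjoint_iff_inter_eq_empty.2
      (oSq_disjoint L hLpos hLhalf hmn (ext n w) (ext n w') hspec hag)
  -- the big square
  set Big : Set ℂ := Sq ⟨u.re - 2 * L n, u.im - 2 * L n⟩ (4 * L n) with hBig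
  have hsubBig : ∀ w ∈ S, oSq (P L n (ext n w)) (L n) ⊆ Big := by
    intro w hw
    rw [hS, Finset.mem_filter] at hw
    obtain ⟨-, q, hqS, hqU⟩ := hw
    intro z hz
    have hdistqu : dist q u ≤ L n := by
      rw [dist_edist]
      exact ENNReal.toReal_le_of_le_ofReal (hLpos n).le
        ((EMetric.edist_le_diam_of_mem hqU hu).trans hU)
    have hre : |q.re - u.re| ≤ L n := by
      calc |q.re - u.re| = |(q - u).re| := by simp
        _ ≤ ‖q - u‖ := Complex.abs_re_le_norm _
        _ = dist q u := (Complex.dist_eq q u).symm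
        _ ≤ L n := hdistqu
    have him : |q.im - u.im| ≤ L n := by
      calc |q.im - u.im| = |(q - u).im| := by simp
        _ ≤ ‖q - u‖ := Complex.abs_im_le_norm _
        _ = dist q u := (Complex.dist_eq q u).symm
        _ ≤ L n := hdistqu
    obtain ⟨⟨z1, z2⟩, z3, z4⟩ := hz
    obtain ⟨⟨q1, q2⟩, q3, q4⟩ := hqS
    rw [abs_sub_le_iff] at hre him
    constructor
    · constructor
      · show u.re - 2 * L n ≤ z.re; linarith [hre.1, hre.2]
      · show z.re ≤ u.re - 2 * L n + 4 * L n; linarith [hre.1, hre.2]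
    · constructor
      · show u.im - 2 * L n ≤ z.im; linarith [him.1, him.2]
      · show z.im ≤ u.im - 2 * L n + 4 * L n; linarith [him.1, him.2]
  -- volume comparison gives the cardinality bound
  have hcard : (S.card : ℝ≥0∞) ≤ 16 := by
    have hvol1 : volume (⋃ w ∈ S, oSq (P L n (ext n w)) (L n))
        = S.card * (ENNReal.ofReal (L n) * ENNReal.ofReal (L n)) := by
      rw [measure_biUnion_finset hdisj (fun w _ => measurableSet_oSq _ _)]
      rw [Finset.sum_congr rfl (fun w _ => volume_oSq (P L n (ext n w)) (L n))]
      rw [Finset.sum_const, nsmul_eq_mul]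
    have hvol2 : volume (⋃ w ∈ S, oSq (P L n (ext n w)) (L n)) ≤ volume Big :=
      measure_mono (Set.iUnion₂_subset hsubBig)
    have hvolBig : volume Big = 16 * (ENNReal.ofReal (L n) * ENNReal.ofReal (L n)) := by
      rw [hBig, volume_Sq]
      rw [show (4 : ℝ) * L n = 4 * L n from rfl]
      rw [ENNReal.ofReal_mul (by norm_num : (0:ℝ) ≤ 4)]
      rw [show ENNReal.ofReal (4:ℝ) = 4 by norm_num]
      ring
    rw [hvol1, hvolBig] at hvol2
    have hne : ENNReal.ofReal (L n) * ENNReal.ofReal (L n) ≠ 0 := by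
      have h1 : ENNReal.ofReal (L n) ≠ 0 := (ENNReal.ofReal_pos.2 (hLpos n)).ne'
      exact mul_ne_zero h1 h1
    have hnt : ENNReal.ofReal (L n) * ENNReal.ofReal (L n) ≠ ⊤ := by
      exact ENNReal.mul_ne_top ENNReal.ofReal_ne_top ENNReal.ofReal_ne_top
    exact (ENNReal.mul_le_mul_iff_left hne hnt).1 hvol2
  calc volume (gg L ⁻¹' U ∩ Ico (0:ℝ) 1) ≤ volume (⋃ w ∈ S, cyl n w) := measure_mono hincl
    _ ≤ ∑ w ∈ S, volume (cyl n w) := measure_biUnion_finset_le S _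
    _ ≤ ∑ _w ∈ S, ENNReal.ofReal (((4:ℝ) ^ n)⁻¹) :=
        Finset.sum_le_sum fun w _ => volume_cyl n w
    _ = S.card * ENNReal.ofReal (((4:ℝ) ^ n)⁻¹) := by
        rw [Finset.sum_const, nsmul_eq_mul]
    _ ≤ 16 * ENNReal.ofReal (((4:ℝ) ^ n)⁻¹) := mul_le_mul_left hcard _

end Count

end Stmt16Aux

open Stmt16Aux

/-- Case (b) of Theorem 4.1 (source-set part): for `0 < d < 2`, `t₀ ∈ (0,1)`, a continuous
strictly increasing `ε : (0,t₀) → (0,∞)` with `ε(t) → 0` as `t → 0⁺`, `t^α/ε(t) → 0` as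
`t → 0⁺` for every `α > 0`, and `t ↦ ε(t)^(1/(2-d))/t` nonincreasing on `(0,t₀)`, and for any
gauge function `h` with `h(t) = t^d·ε(t)` on `(0,t₀)`, there exists a compact set `E ⊆ ℂ`
whose generalized Hausdorff measure with gauge `h` is strictly positive and finite. -/
theorem stmt16 (d t₀ : ℝ) (hd0 : 0 < d) (hd2 : d < 2) (ht₀0 : 0 < t₀) (ht₀1 : t₀ < 1)
    (ε : ℝ → ℝ) (hεcont : ContinuousOn ε (Ioo 0 t₀))
    (hεpos : ∀ t ∈ Ioo 0 t₀, 0 < ε t)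
    (hεmono : StrictMonoOn ε (Ioo 0 t₀))
    (hεlim : Tendsto ε (𝓝[>] 0) (𝓝 0))
    (hεsmall : ∀ α : ℝ, 0 < α → Tendsto (fun t => t ^ α / ε t) (𝓝[>] 0) (𝓝 0))
    (hεanti : AntitoneOn (fun t => ε t ^ (1 / (2 - d)) / t) (Ioo 0 t₀))
    (h : ℝ → ℝ)
    (hcont : ContinuousOn h (Ici 0)) (hmono : MonotoneOn h (Ici 0))
    (h0 : h 0 = 0) (hpos : ∀ t : ℝ, 0 < t → 0 < h t)
    (hh : ∀ t ∈ Ioo 0 t₀, h t = t ^ d * ε t) :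
    ∃ E : Set ℂ, IsCompact E ∧
      0 < (Measure.mkMetric (fun r : ℝ≥0∞ => ENNReal.ofReal (h r.toReal)) : Measure ℂ) E ∧
      (Measure.mkMetric (fun r : ℝ≥0∞ => ENNReal.ofReal (h r.toReal)) : Measure ℂ) E < ⊤ := by
  classical
  have hd2' : (0:ℝ) < 2 - d := by linarith
  -- Step 1: the doubling-type inequality h(t/2) ≥ h(t)/4 on (0, t₀)
  have hq : ∀ t ∈ Ioo (0:ℝ) t₀, h t / 4 ≤ h (t / 2) := by
    intro t ht
    obtain ⟨ht0, ht1⟩ := ht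
    have ht2 : t / 2 ∈ Ioo (0:ℝ) t₀ := ⟨by linarith, by linarith⟩
    have hanti := hεanti ht2 ⟨ht0, ht1⟩ (by linarith : t / 2 ≤ t)
    -- from antitonicity : ε t ^ θ / t ≤ ε (t/2) ^ θ / (t/2)
    set θ : ℝ := 1 / (2 - d) with hθdef
    have hθ : 0 < θ := by positivity
    have hεt : 0 < ε t := hεpos t ⟨ht0, ht1⟩
    have hεt2 : 0 < ε (t / 2) := hεpos _ ht2
    have key1 : ε t ^ θ / 2 ≤ ε (t / 2) ^ θ := by
      have hx : ε t ^ θ / t ≤ ε (t / 2) ^ θ / (t / 2) := hanti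
      rw [div_le_div_iff₀ ht0 (by linarith : (0:ℝ) < t / 2)] at hx
      nlinarith [Real.rpow_pos_of_pos hεt θ, Real.rpow_pos_of_pos hεt2 θ]
    -- raise to power (2 - d)
    have key2 : ε t / 2 ^ (2 - d : ℝ) ≤ ε (t / 2) := by
      have hmono2 := Real.rpow_le_rpow (by positivity : (0:ℝ) ≤ ε t ^ θ / 2) key1 hd2'.le
      have e1 : (ε (t / 2) ^ θ) ^ (2 - d : ℝ) = ε (t / 2) := by
        rw [← Real.rpow_mul hεt2.le, hθdef]
        rw [one_div_mul_cancel hd2'.ne', Real.rpow_one]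
      have e2 : (ε t ^ θ / 2) ^ (2 - d : ℝ)
          = ε t / 2 ^ (2 - d : ℝ) := by
        rw [Real.div_rpow (by positivity) (by norm_num : (0:ℝ) ≤ 2), ← Real.rpow_mul hεt.le,
          hθdef, one_div_mul_cancel hd2'.ne', Real.rpow_one]
      rw [e1, e2] at hmono2
      exact hmono2
    have h2d : (2:ℝ) ^ (d:ℝ) * (2:ℝ) ^ (2 - d : ℝ) = 4 := by
      rw [← Real.rpow_add (by norm_num : (0:ℝ) < 2)]
      norm_num
    have htd : (t / 2) ^ (d:ℝ) = t ^ (d:ℝ) / 2 ^ (d:ℝ) :=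
      Real.div_rpow ht0.le (by norm_num) d
    have htpos : (0:ℝ) < t ^ (d:ℝ) := Real.rpow_pos_of_pos ht0 d
    have h2dpos : (0:ℝ) < (2:ℝ) ^ (d:ℝ) := Real.rpow_pos_of_pos (by norm_num) d
    have h2d2pos : (0:ℝ) < (2:ℝ) ^ (2 - d:ℝ) := Real.rpow_pos_of_pos (by norm_num) _
    rw [hh t ⟨ht0, ht1⟩, hh (t / 2) ht2, htd]
    calc t ^ (d:ℝ) * ε t / 4 = t ^ (d:ℝ) / 2 ^ (d:ℝ) * (ε t / 2 ^ (2 - d:ℝ)) := by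
          field_simp
          nlinarith [h2d]
      _ ≤ t ^ (d:ℝ) / 2 ^ (d:ℝ) * ε (t / 2) := by
          apply mul_le_mul_of_nonneg_left key2 (by positivity)
  -- Step 2: construction of the scale sequence L
  have hstep : ∀ t : ℝ, ∃ s : ℝ, (0 < t ∧ t < t₀) → (0 < s ∧ s ≤ t / 2 ∧ h s = h t / 4) := by
    intro t
    by_cases ht : 0 < t ∧ t < t₀
    · obtain ⟨ht0, ht1⟩ := ht
      have hIVT := intermediate_value_Icc (by linarith : (0:ℝ) ≤ t / 2)
        (hcont.mono (fun x hx => hx.1))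
      have hmem : h t / 4 ∈ Icc (h 0) (h (t / 2)) := by
        constructor
        · rw [h0]
          have := hpos t ht0
          linarith
        · exact hq t ⟨ht0, ht1⟩
      obtain ⟨s, hs, hsval⟩ := hIVT hmem
      refine ⟨s, fun _ => ⟨?_, hs.2, hsval⟩⟩
      rcases lt_or_eq_of_le hs.1 with hlt | heq
      · exact hlt
      · exfalso
        rw [← heq, h0] at hsval
        have := hpos t ht0
        linarith [hsval]
    · exact ⟨1, fun hc => absurd hc ht⟩
  choose F hF using hstep
  set L : ℕ → ℝ := fun n => Nat.rec (t₀ / 4) (fun _ prev => F prev) n with hLdef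
  have hL0 : L 0 = t₀ / 4 := rfl
  have hLsucc : ∀ n, L (n + 1) = F (L n) := fun n => rfl
  have hLinv : ∀ n, 0 < L n ∧ L n ≤ t₀ / 4 := by
    intro n
    induction n with
    | zero => exact ⟨by rw [hL0]; positivity, le_refl _⟩
    | succ n ih =>
      have hFn := hF (L n) ⟨ih.1, by linarith [ih.2]⟩
      exact ⟨hFn.1, by linarith [hFn.2.1, ih.2]⟩
  have hLpos : ∀ n, 0 < L n := fun n => (hLinv n).1
  have hLhalf : ∀ n, L (n + 1) ≤ L n / 2 := by
    intro n
    exact (hF (L n) ⟨hLpos n, by linarith [(hLinv n).2]⟩).2.1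
  have hLmemIoo : ∀ n, L n ∈ Ioo (0:ℝ) t₀ := fun n => ⟨hLpos n, by linarith [(hLinv n).2]⟩
  have hLh4 : ∀ n, h (L (n + 1)) = h (L n) / 4 := by
    intro n
    exact (hF (L n) ⟨hLpos n, by linarith [(hLinv n).2]⟩).2.2
  have hLval : ∀ n, h (L n) = h (t₀ / 4) / 4 ^ n := by
    intro n
    induction n with
    | zero => rw [hL0]; norm_num
    | succ n ih => rw [hLh4 n, ih, pow_succ]; ring
  have hht₀4 : 0 < h (t₀ / 4) := hpos _ (by positivity)
  -- the compact set
  set E : Set ℂ := Set.range (ff L) with hEdef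
  refine ⟨E, isCompact_range (ff_continuous L hLpos hLhalf), ?_, ?_⟩
  · -- positivity of the measure
    rw [Measure.mkMetric_apply]
    set C : ℝ≥0∞ := ENNReal.ofReal (64 / h (t₀ / 4)) with hC
    have hkey : ENNReal.ofReal (h (t₀ / 4) / 64) ≤
        ⨅ (t : ℕ → Set ℂ) (_ : E ⊆ iUnion t)
          (_ : ∀ n, EMetric.diam (t n) ≤ ENNReal.ofReal (L 1)),
          ∑' n, ⨆ _ : (t n).Nonempty, ENNReal.ofReal (h (EMetric.diam (t n)).toReal) := by
      refine le_iInf fun t => le_iInf fun hcov => le_iInf fun hdiam => ?_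
      have hclaim : ∀ j, volume (gg L ⁻¹' t j ∩ Ico (0:ℝ) 1)
          ≤ C * ⨆ _ : (t j).Nonempty, ENNReal.ofReal (h (EMetric.diam (t j)).toReal) := by
        intro j
        rcases (t j).eq_empty_or_nonempty with hje | hjne
        · simp [hje]
        · rw [iSup_pos hjne]
          rcases eq_or_lt_of_le (zero_le : 0 ≤ EMetric.diam (t j)) with hdz | hdpos
          · -- degenerate case : diameter zero
            have hz : ∀ n, volume (gg L ⁻¹' t j ∩ Ico (0:ℝ) 1)
                ≤ 16 * ENNReal.ofReal (((4:ℝ) ^ n)⁻¹) := fun n =>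
              mass_bound L hLpos hLhalf n (t j) (by rw [← hdz]; exact zero_le)
            have ht1 : Tendsto (fun n : ℕ => ((4:ℝ) ^ n)⁻¹) atTop (𝓝 0) := by
              have := tendsto_pow_atTop_nhds_zero_of_lt_one
                (by norm_num : (0:ℝ) ≤ 4⁻¹) (by norm_num : (4:ℝ)⁻¹ < 1)
              simpa [inv_pow] using this
            have htend : Tendsto (fun n : ℕ => (16:ℝ≥0∞) * ENNReal.ofReal (((4:ℝ) ^ n)⁻¹))
                atTop (𝓝 0) := by
              have h' : Tendsto (fun n : ℕ => (16:ℝ≥0∞) * ENNReal.ofReal (((4:ℝ) ^ n)⁻¹))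
                  atTop (𝓝 ((16:ℝ≥0∞) * ENNReal.ofReal 0)) :=
                ENNReal.Tendsto.const_mul (ENNReal.tendsto_ofReal ht1) (Or.inr (by simp))
              simpa using h'
            exact le_trans (ge_of_tendsto' htend hz) zero_le
          · -- positive diameter
            have hdne : EMetric.diam (t j) ≠ ⊤ :=
              (lt_of_le_of_lt (hdiam j) ENNReal.ofReal_lt_top).ne
            have hex : ∃ n, ENNReal.ofReal (L n) < EMetric.diam (t j) := by
              have htL : Tendsto (fun n => ENNReal.ofReal (L n)) atTop (𝓝 0) := by
                have := ENNReal.tendsto_ofReal (L_tendsto L hLpos hLhalf)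
                simpa using this
              exact (htL.eventually_lt_const hdpos).exists
            have hNspec := Nat.find_spec hex
            have hNge : 2 ≤ Nat.find hex := by
              have hne0 : Nat.find hex ≠ 0 := by
                intro hc
                rw [hc] at hNspec
                have : EMetric.diam (t j) ≤ ENNReal.ofReal (L 0) :=
                  (hdiam j).trans (ENNReal.ofReal_le_ofReal
                    (by linarith [hLhalf 0, hLpos 1] : L 1 ≤ L 0))
                exact absurd hNspec (not_lt.2 this)
              have hne1 : Nat.find hex ≠ 1 := by
                intro hc
                rw [hc] at hNspec
                exact absurd hNspec (not_lt.2 (hdiam j))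
              omega
            obtain ⟨n, hn⟩ : ∃ n, Nat.find hex = n + 1 := ⟨Nat.find hex - 1, by omega⟩
            have hn1 : 1 ≤ n := by omega
            have hmin : EMetric.diam (t j) ≤ ENNReal.ofReal (L n) :=
              not_lt.1 (Nat.find_min hex (by omega))
            have hmass := mass_bound L hLpos hLhalf n (t j) hmin
            have hDL : L (n + 1) < (EMetric.diam (t j)).toReal := by
              rw [hn] at hNspec
              exact (ENNReal.ofReal_lt_iff_lt_toReal (hLpos (n + 1)).le hdne).1 hNspec
            have hD0 : (0:ℝ) ≤ (EMetric.diam (t j)).toReal := ENNReal.toReal_nonneg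
            have hhD : h (t₀ / 4) / 4 ^ (n + 1) ≤ h ((EMetric.diam (t j)).toReal) := by
              rw [← hLval (n + 1)]
              exact hmono (hLpos (n + 1)).le hD0 hDL.le
            refine le_trans hmass ?_
            rw [hC, ← ENNReal.ofReal_mul (by positivity : (0:ℝ) ≤ 64 / h (t₀ / 4)),
              show (16:ℝ≥0∞) = ENNReal.ofReal (16:ℝ) by norm_num,
              ← ENNReal.ofReal_mul (by norm_num : (0:ℝ) ≤ 16)]
            apply ENNReal.ofReal_le_ofReal
            have hstep2 := mul_le_mul_of_nonneg_left hhD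
              (by positivity : (0:ℝ) ≤ 64 / h (t₀ / 4))
            calc (16:ℝ) * ((4:ℝ) ^ n)⁻¹
                = 64 / h (t₀ / 4) * (h (t₀ / 4) / 4 ^ (n + 1)) := by
                  rw [pow_succ]
                  field_simp
                  ring
              _ ≤ 64 / h (t₀ / 4) * h ((EMetric.diam (t j)).toReal) := hstep2
      have hsub : Ico (0:ℝ) 1 ⊆ ⋃ j, gg L ⁻¹' t j ∩ Ico (0:ℝ) 1 := by
        intro x hx
        have hmemE : gg L x ∈ E := ⟨dig4 x, rfl⟩
        obtain ⟨j, hj⟩ := Set.mem_iUnion.1 (hcov hmemE)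
        exact Set.mem_iUnion.2 ⟨j, hj, hx⟩
      have h1le : (1:ℝ≥0∞) ≤ C *
          ∑' j, ⨆ _ : (t j).Nonempty, ENNReal.ofReal (h (EMetric.diam (t j)).toReal) := by
        calc (1:ℝ≥0∞) = volume (Ico (0:ℝ) 1) := by simp
          _ ≤ volume (⋃ j, gg L ⁻¹' t j ∩ Ico (0:ℝ) 1) := measure_mono hsub
          _ ≤ ∑' j, volume (gg L ⁻¹' t j ∩ Ico (0:ℝ) 1) := measure_iUnion_le _
          _ ≤ ∑' j, C * ⨆ _ : (t j).Nonempty,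
                ENNReal.ofReal (h (EMetric.diam (t j)).toReal) :=
              ENNReal.tsum_le_tsum hclaim
          _ = C * ∑' j, ⨆ _ : (t j).Nonempty,
                ENNReal.ofReal (h (EMetric.diam (t j)).toReal) := ENNReal.tsum_mul_left
      have hC0 : C ≠ 0 := by
        rw [hC]
        exact (ENNReal.ofReal_pos.2 (by positivity)).ne'
      have hCt : C ≠ ⊤ := ENNReal.ofReal_ne_top
      have hCinv : ENNReal.ofReal (h (t₀ / 4) / 64) = C⁻¹ := by
        rw [hC, ← ENNReal.ofReal_inv_of_pos (by positivity : (0:ℝ) < 64 / h (t₀ / 4))]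
        congr 1
        field_simp
      rw [hCinv]
      calc C⁻¹ = C⁻¹ * 1 := (mul_one _).symm
        _ ≤ C⁻¹ * (C * _) := mul_le_mul_right h1le _
        _ = _ := by rw [← mul_assoc, ENNReal.inv_mul_cancel hC0 hCt, one_mul]
    calc (0:ℝ≥0∞) < ENNReal.ofReal (h (t₀ / 4) / 64) :=
          ENNReal.ofReal_pos.2 (by positivity)
      _ ≤ _ := le_iSup₂_of_le (ENNReal.ofReal (L 1))
          (ENNReal.ofReal_pos.2 (hLpos 1)) hkey
  · -- finiteness
    have hcover : ∀ n : ℕ, E ⊆ ⋃ w : Fin n → Fin 4, Sq (P L n (ext n w)) (L n) := by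
      intro n z hz
      obtain ⟨ω, rfl⟩ := hz
      refine Set.mem_iUnion.2 ⟨fun m : Fin n => ω m, ?_⟩
      rw [P_ext]
      exact ff_mem_Sq L hLpos hLhalf ω n
    have hdiam : ∀ n (w : Fin n → Fin 4),
        EMetric.diam (Sq (P L n (ext n w)) (L n)) ≤ ENNReal.ofReal (2 * L n) :=
      fun n w => diam_Sq _ _ (hLpos n).le
    have hr : Tendsto (fun n => ENNReal.ofReal (2 * L n)) atTop (𝓝 0) := by
      have := ENNReal.tendsto_ofReal ((L_tendsto L hLpos hLhalf).const_mul 2)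
      simpa using this
    have hbound := Measure.mkMetric_le_liminf_sum E (fun n => ENNReal.ofReal (2 * L n)) hr
      (fun n w => Sq (P L n (ext n w)) (L n)) (Eventually.of_forall hdiam)
      (Eventually.of_forall hcover) (fun r => ENNReal.ofReal (h r.toReal))
    have hterm : ∀ n, (∑ w : Fin n → Fin 4,
        ENNReal.ofReal (h (EMetric.diam (Sq (P L n (ext n w)) (L n))).toReal))
        ≤ ENNReal.ofReal (4 * h (t₀ / 4)) := by
      intro n
      have h1 : ∀ w : Fin n → Fin 4,
          ENNReal.ofReal (h (EMetric.diam (Sq (P L n (ext n w)) (L n))).toReal)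
          ≤ ENNReal.ofReal (4 * (h (t₀ / 4) / 4 ^ n)) := by
        intro w
        apply ENNReal.ofReal_le_ofReal
        have hd' : (EMetric.diam (Sq (P L n (ext n w)) (L n))).toReal ≤ 2 * L n :=
          ENNReal.toReal_le_of_le_ofReal (by linarith [hLpos n]) (hdiam n w)
        have hma : h ((EMetric.diam (Sq (P L n (ext n w)) (L n))).toReal) ≤ h (2 * L n) :=
          hmono ENNReal.toReal_nonneg (mem_Ici.2 (by linarith [hLpos n])) hd'
        have h2Ln : 2 * L n ∈ Ioo (0:ℝ) t₀ :=
          ⟨by linarith [hLpos n], by linarith [(hLinv n).2]⟩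
        have hq2 := hq (2 * L n) h2Ln
        rw [show (2 * L n) / 2 = L n by ring] at hq2
        rw [← hLval n]
        linarith
      calc (∑ w : Fin n → Fin 4,
            ENNReal.ofReal (h (EMetric.diam (Sq (P L n (ext n w)) (L n))).toReal))
          ≤ ∑ _w : Fin n → Fin 4, ENNReal.ofReal (4 * (h (t₀ / 4) / 4 ^ n)) :=
            Finset.sum_le_sum fun w _ => h1 w
        _ = (Fintype.card (Fin n → Fin 4)) * ENNReal.ofReal (4 * (h (t₀ / 4) / 4 ^ n)) := by
            rw [Finset.sum_const, nsmul_eq_mul, Finset.card_univ]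
        _ = ENNReal.ofReal (4 * h (t₀ / 4)) := by
            rw [Fintype.card_fun]
            simp only [Fintype.card_fin]
            rw [show ((4 ^ n : ℕ) : ℝ≥0∞) = ENNReal.ofReal ((4:ℝ) ^ n) by
              rw [ENNReal.ofReal_pow (by norm_num : (0:ℝ) ≤ 4)]
              norm_num]
            rw [← ENNReal.ofReal_mul (by positivity : (0:ℝ) ≤ (4:ℝ) ^ n)]
            congr 1
            field_simp
    have hliminf : Filter.liminf (fun n => ∑ w : Fin n → Fin 4,
        ENNReal.ofReal (h (EMetric.diam (Sq (P L n (ext n w)) (L n))).toReal)) atTop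
        ≤ ENNReal.ofReal (4 * h (t₀ / 4)) := by
      refine le_trans (liminf_le_liminf (Eventually.of_forall hterm)) ?_
      rw [liminf_const]
    exact lt_of_le_of_lt (hbound.trans hliminf) ENNReal.ofReal_lt_top
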